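/- As formal power series in q: Σ_{i,j>0} q^{i+j}/((1-q^i)(1-q^j)(1-q^{i+j})) = Z(3) - Σ_{n>0} n·q^n/(1-q^n)^2. -/

import Mathlib

open PowerSeries

/-- Sum over positive integers, coefficientwise. -/
noncomputable def psum (f : ℕ → ℚ⟦X⟧) : ℚ⟦X⟧ :=
  PowerSeries.mk fun m => ∑ n ∈ Finset.Icc 1 m, PowerSeries.coeff m (f n)

/-- Double sum over pairs of positive integers, coefficientwise. -/
noncomputable def psum2 (f : ℕ → ℕ → ℚ⟦X⟧) : ℚ⟦X⟧ :=
  PowerSeries.mk fun m => ∑ p ∈ Finset.Icc 1 m ×ˢ Finset.Icc 1 m,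
    PowerSeries.coeff m (f p.1 p.2)

noncomputable def Z3 : ℚ⟦X⟧ := psum fun n => X ^ n * (1 + X ^ n) * ((1 - X ^ n)⁻¹) ^ 3

open Finset

noncomputable def G (n : ℕ) : ℚ⟦X⟧ := PowerSeries.mk fun k => if n ∣ k then 1 else 0


lemma inv_one_sub_pow {n : ℕ} (hn : n ≠ 0) : (1 - X ^ n : ℚ⟦X⟧)⁻¹ = G n := by
  rw [PowerSeries.inv_eq_iff_mul_eq_one]
  · ext m
    have : (G n) * (1 - X ^ n : ℚ⟦X⟧) = G n - G n * X ^ n := by ring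
    rw [this, map_sub, PowerSeries.coeff_mul_X_pow']
    simp only [G, coeff_mk, coeff_one]
    by_cases h : n ≤ m
    · rw [if_pos h]
      by_cases hd : n ∣ m
      · have hd' : n ∣ m - n := Nat.dvd_sub hd dvd_rfl
        rw [if_pos hd, if_pos hd', if_neg (by omega)]
        norm_num
      · have hd' : ¬ n ∣ m - n := fun hc => hd (by
          have h2 : m - n + n = m := Nat.sub_add_cancel h
          exact h2 ▸ Nat.dvd_add hc dvd_rfl)
        rw [if_neg hd, if_neg hd', if_neg (by omega)]
        norm_num
    · rw [if_neg h]
      rcases Nat.eq_zero_or_pos m with rfl | hm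
      · simp [Nat.zero_mod, Nat.dvd_zero]
      · rw [if_neg (fun hc => absurd (Nat.le_of_dvd hm hc) h), if_neg (by omega)]
        norm_num
  · have : constantCoeff (1 - X ^ n : ℚ⟦X⟧) = 1 := by
      rw [map_sub, map_one, map_pow, constantCoeff_X, zero_pow hn, sub_zero]
    rw [this]; exact one_ne_zero



lemma coeff_G (n k : ℕ) : coeff k (G n) = if n ∣ k then 1 else 0 := by
  simp [G]

lemma ite_one_mul_ite (P Q : Prop) [Decidable P] [Decidable Q] :
    (if P then (1:ℚ) else 0) * (if Q then (1:ℚ) else 0) = if P ∧ Q then 1 else 0 := by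
  by_cases hP : P <;> by_cases hQ : Q <;> simp [hP, hQ]

lemma coeff_GG {n : ℕ} (hn : 1 ≤ n) (R : ℕ) :
    coeff R (G n * G n) = if n ∣ R then ((R / n : ℕ) + 1 : ℚ) else 0 := by
  rw [coeff_mul]
  simp only [coeff_G, ite_one_mul_ite]
  rw [Finset.sum_boole]
  by_cases hd : n ∣ R
  · rw [if_pos hd]
    have hcard : #(filter (fun x : ℕ × ℕ => n ∣ x.1 ∧ n ∣ x.2) (antidiagonal R))
        = #(range (R / n + 1)) := by
      refine Finset.card_nbij' (fun p => p.1 / n) (fun a => (n * a, R - n * a)) ?_ ?_ ?_ ?_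
      · intro p hp
        simp only [Finset.mem_coe, Finset.mem_filter, HasAntidiagonal.mem_antidiagonal, Finset.mem_range] at hp ⊢
        obtain ⟨hsum, ⟨x, hx⟩, h2⟩ := hp
        rw [hx, Nat.mul_div_cancel_left _ (by omega)]
        obtain ⟨y, hy⟩ := hd
        rw [hx] at hsum
        have h3 : n * x ≤ n * y := by rw [← hy]; linarith
        have : x ≤ y := Nat.le_of_mul_le_mul_left h3 (by omega)
        rw [hy, Nat.mul_div_cancel_left _ (by omega)]
        omega
      · intro a ha
        simp only [Finset.mem_coe, Finset.mem_filter, HasAntidiagonal.mem_antidiagonal, Finset.mem_range] at ha ⊢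
        obtain ⟨k, rfl⟩ := hd
        rw [Nat.mul_div_cancel_left _ (by omega)] at ha
        have h1 : n * a ≤ n * k := Nat.mul_le_mul_left n (by omega)
        exact ⟨by omega, ⟨a, rfl⟩, ⟨k - a, by rw [Nat.mul_sub]⟩⟩
      · intro p hp
        simp only [Finset.mem_coe, Finset.mem_filter, HasAntidiagonal.mem_antidiagonal] at hp
        obtain ⟨hsum, ⟨x, hx⟩, h2⟩ := hp
        have hle : p.1 ≤ R := by omega
        have : n * (p.1 / n) = p.1 := by
          rw [hx, Nat.mul_div_cancel_left _ (by omega)]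
        ext
        · simp [this]
        · simp [this]; omega
      · intro a ha
        simp only [Finset.mem_coe, Finset.mem_range] at ha
        simp [Nat.mul_div_cancel_left _ (show 0 < n by omega)]
    rw [hcard, Finset.card_range]
    push_cast
    ring
  · rw [if_neg hd]
    rw [Finset.filter_false_of_mem, Finset.card_empty]
    · simp
    · rintro p hp ⟨⟨x, hx⟩, ⟨y, hy⟩⟩
      rw [HasAntidiagonal.mem_antidiagonal] at hp
      exact hd ⟨x + y, by rw [Nat.mul_add, ← hx, ← hy, hp]⟩


lemma gauss (N : ℕ) : ∑ a ∈ range N, ((a : ℚ) + 1) = N * (N + 1) / 2 := by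
  induction N with
  | zero => simp
  | succ n ih => rw [Finset.sum_range_succ, ih]; push_cast; ring

lemma coeff_GGGn {n : ℕ} (hn : 1 ≤ n) (R : ℕ) :
    coeff R (G n * G n * G n)
      = if n ∣ R then (((R / n : ℕ) + 1) * ((R / n : ℕ) + 2) / 2 : ℚ) else 0 := by
  rw [coeff_mul]
  have hterm : ∀ p : ℕ × ℕ, coeff p.1 (G n * G n) * coeff p.2 (G n)
      = if n ∣ p.1 ∧ n ∣ p.2 then (((p.1 / n : ℕ) + 1 : ℚ)) else 0 := by
    intro p
    rw [coeff_GG hn, coeff_G]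
    by_cases h1 : n ∣ p.1 <;> by_cases h2 : n ∣ p.2 <;> simp [h1, h2]
  rw [Finset.sum_congr rfl fun p _ => hterm p, ← Finset.sum_filter]
  by_cases hd : n ∣ R
  · rw [if_pos hd]
    rw [Finset.sum_nbij' (i := fun p : ℕ × ℕ => p.1 / n) (j := fun a => (n * a, R - n * a))
      (t := range (R / n + 1)) (g := fun a => (a : ℚ) + 1) ?_ ?_ ?_ ?_ ?_]
    · rw [gauss]
      push_cast; ring
    · intro p hp
      simp only [Finset.mem_coe, Finset.mem_filter, HasAntidiagonal.mem_antidiagonal, Finset.mem_range] at hp ⊢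
      obtain ⟨hsum, ⟨x, hx⟩, h2⟩ := hp
      rw [hx, Nat.mul_div_cancel_left _ (by omega)]
      obtain ⟨y, hy⟩ := hd
      rw [hx] at hsum
      have h3 : n * x ≤ n * y := by rw [← hy]; linarith
      have : x ≤ y := Nat.le_of_mul_le_mul_left h3 (by omega)
      rw [hy, Nat.mul_div_cancel_left _ (by omega)]
      omega
    · intro a ha
      simp only [Finset.mem_coe, Finset.mem_filter, HasAntidiagonal.mem_antidiagonal, Finset.mem_range] at ha ⊢
      obtain ⟨k, rfl⟩ := hd
      rw [Nat.mul_div_cancel_left _ (by omega)] at ha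
      have h1 : n * a ≤ n * k := Nat.mul_le_mul_left n (by omega)
      exact ⟨by omega, ⟨a, rfl⟩, ⟨k - a, by rw [Nat.mul_sub]⟩⟩
    · intro p hp
      simp only [Finset.mem_coe, Finset.mem_filter, HasAntidiagonal.mem_antidiagonal] at hp
      obtain ⟨hsum, ⟨x, hx⟩, h2⟩ := hp
      have : n * (p.1 / n) = p.1 := by rw [hx, Nat.mul_div_cancel_left _ (by omega)]
      ext
      · simp [this]
      · simp [this]; omega
    · intro a ha
      simp only [Finset.mem_coe, Finset.mem_range] at ha
      simp [Nat.mul_div_cancel_left _ (show 0 < n by omega)]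
    · intro p hp
      simp only [Finset.mem_coe, Finset.mem_filter, HasAntidiagonal.mem_antidiagonal] at hp
      obtain ⟨hsum, ⟨x, hx⟩, h2⟩ := hp
      simp only [hx, Nat.mul_div_cancel_left _ (show 0 < n by omega)]
  · rw [if_neg hd]
    rw [Finset.filter_false_of_mem, Finset.sum_empty]
    rintro p hp ⟨⟨x, hx⟩, ⟨y, hy⟩⟩
    rw [HasAntidiagonal.mem_antidiagonal] at hp
    exact hd ⟨x + y, by rw [Nat.mul_add, ← hx, ← hy, hp]⟩


lemma coeff_Z3_summand {n m : ℕ} (hn : 1 ≤ n) (hm : n ≤ m) :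
    coeff m (X ^ n * (1 + X ^ n) * ((1 - X ^ n)⁻¹ : ℚ⟦X⟧) ^ 3)
      - (n : ℚ) * coeff m (X ^ n * ((1 - X ^ n)⁻¹ : ℚ⟦X⟧) ^ 2)
      = if n ∣ m then (((m / n : ℕ) : ℚ) ^ 2 - (n : ℚ) * ((m / n : ℕ) : ℚ)) else 0 := by
  rw [inv_one_sub_pow (by omega)]
  have e1 : X ^ n * (1 + X ^ n) * (G n) ^ 3
      = (G n * G n * G n) * X ^ n + (G n * G n * G n) * X ^ (n + n) := by ring
  have e2 : X ^ n * (G n) ^ 2 = (G n * G n) * X ^ n := by ring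
  rw [e1, e2, map_add, coeff_mul_X_pow', coeff_mul_X_pow', coeff_mul_X_pow']
  rw [if_pos hm, if_pos hm]
  by_cases hd : n ∣ m
  · rw [if_pos hd]
    obtain ⟨k, rfl⟩ := hd
    have hk : 1 ≤ k := by
      rcases Nat.eq_zero_or_pos k with rfl | h; · simp at hm; omega
      · exact h
    have hs1 : n * k - n = n * (k - 1) := by rw [Nat.mul_sub]; omega
    have hd1 : n ∣ n * k - n := by rw [hs1]; exact ⟨k - 1, rfl⟩
    have hq1 : (n * k - n) / n = k - 1 := by rw [hs1, Nat.mul_div_cancel_left _ (by omega)]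
    have hq0 : (n * k) / n = k := Nat.mul_div_cancel_left _ (by omega)
    rw [coeff_GGGn hn, coeff_GG hn, if_pos hd1, if_pos hd1, hq1, hq0]
    by_cases h2 : n + n ≤ n * k
    · have hk2 : 2 ≤ k := by nlinarith
      rw [if_pos h2]
      have hs2 : n * k - (n + n) = n * (k - 2) := by rw [Nat.mul_sub]; omega
      have hd2 : n ∣ n * k - (n + n) := by rw [hs2]; exact ⟨k - 2, rfl⟩
      have hq2 : (n * k - (n + n)) / n = k - 2 := by
        rw [hs2, Nat.mul_div_cancel_left _ (by omega)]
      rw [coeff_GGGn hn, if_pos hd2, hq2]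
      have c1 : ((k - 1 : ℕ) : ℚ) = (k : ℚ) - 1 := by
        rw [Nat.cast_sub hk]; norm_num
      have c2 : ((k - 2 : ℕ) : ℚ) = (k : ℚ) - 2 := by
        rw [Nat.cast_sub hk2]; norm_num
      rw [c1, c2]
      ring
    · rw [if_neg h2]
      have hk1 : k = 1 := by nlinarith
      subst hk1
      norm_num
  · rw [if_neg hd]
    have hd1 : ¬ n ∣ m - n := fun hc => hd (by
      have h2 : m - n + n = m := Nat.sub_add_cancel hm
      exact h2 ▸ Nat.dvd_add hc dvd_rfl)
    rw [coeff_GGGn hn, coeff_GG hn, if_neg hd1, if_neg hd1]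
    by_cases h2 : n + n ≤ m
    · have hd2 : ¬ n ∣ m - (n + n) := fun hc => hd1 (by
        have h3 : m - (n + n) + n = m - n := by omega
        exact h3 ▸ Nat.dvd_add hc dvd_rfl)
      rw [if_pos h2, coeff_GGGn hn, if_neg hd2]
      ring
    · rw [if_neg h2]; ring



lemma coeff_GGG_card {i j l R : ℕ} (hi : 1 ≤ i) (hj : 1 ≤ j) (hl : 1 ≤ l) :
    coeff R (G i * G j * G l)
      = #((range (R+1) ×ˢ range (R+1) ×ˢ range (R+1)).filter
          (fun x : ℕ×ℕ×ℕ => x.1*i + x.2.1*j + x.2.2*l = R)) := by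
  rw [coeff_mul]
  have hterm : ∀ p : ℕ × ℕ, coeff p.1 (G i * G j) * coeff p.2 (G l)
      = ∑ q ∈ antidiagonal p.1, (if i ∣ q.1 ∧ j ∣ q.2 ∧ l ∣ p.2 then (1:ℚ) else 0) := by
    intro p
    rw [coeff_mul, Finset.sum_mul]
    refine Finset.sum_congr rfl fun q _ => ?_
    simp only [coeff_G]
    by_cases h1 : i ∣ q.1 <;> by_cases h2 : j ∣ q.2 <;> by_cases h3 : l ∣ p.2 <;>
      simp [h1, h2, h3]
  rw [Finset.sum_congr rfl fun p _ => hterm p]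
  rw [Finset.sum_sigma']
  rw [Finset.sum_boole]
  norm_num
  apply Finset.card_nbij' (i := fun x : Σ _ : ℕ × ℕ, ℕ × ℕ => (x.2.1 / i, x.2.2 / j, x.1.2 / l))
    (j := fun x : ℕ×ℕ×ℕ => ⟨(x.1 * i + x.2.1 * j, x.2.2 * l), (x.1 * i, x.2.1 * j)⟩)
  · rintro ⟨⟨p1, p2⟩, q1, q2⟩ hx
    simp only [Finset.mem_coe, Finset.mem_filter, Finset.mem_sigma, HasAntidiagonal.mem_antidiagonal, Finset.mem_product,
      Finset.mem_range] at hx ⊢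
    obtain ⟨⟨hp, hq⟩, ⟨x, hx1⟩, ⟨y, hy1⟩, ⟨z, hz1⟩⟩ := hx
    have d1 : q1 / i = x := by rw [hx1, Nat.mul_div_cancel_left _ (by omega)]
    have d2 : q2 / j = y := by rw [hy1, Nat.mul_div_cancel_left _ (by omega)]
    have d3 : p2 / l = z := by rw [hz1, Nat.mul_div_cancel_left _ (by omega)]
    simp only [d1, d2, d3]
    have e1 : x * i = q1 := by rw [hx1]; ring
    have e2 : y * j = q2 := by rw [hy1]; ring
    have e3 : z * l = p2 := by rw [hz1]; ring
    have hx' : x ≤ q1 := by calc x ≤ x * i := Nat.le_mul_of_pos_right x (by omega)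
                                _ = q1 := e1
    have hy' : y ≤ q2 := by calc y ≤ y * j := Nat.le_mul_of_pos_right y (by omega)
                                _ = q2 := e2
    have hz' : z ≤ p2 := by calc z ≤ z * l := Nat.le_mul_of_pos_right z (by omega)
                                _ = p2 := e3
    refine ⟨⟨by omega, by omega, by omega⟩, ?_⟩
    rw [e1, e2, e3]; omega
  · rintro ⟨a, b, c⟩ hx
    simp only [Finset.mem_coe, Finset.mem_filter, Finset.mem_sigma, HasAntidiagonal.mem_antidiagonal, Finset.mem_product,
      Finset.mem_range] at hx ⊢
    obtain ⟨⟨ha, hb, hc⟩, heq⟩ := hx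
    exact ⟨⟨heq, by simp⟩, ⟨a, by ring⟩, ⟨b, by ring⟩, ⟨c, by ring⟩⟩
  · rintro ⟨⟨p1, p2⟩, q1, q2⟩ hx
    simp only [Finset.mem_coe, Finset.mem_filter, Finset.mem_sigma, HasAntidiagonal.mem_antidiagonal] at hx
    obtain ⟨⟨hp, hq⟩, ⟨x, hx1⟩, ⟨y, hy1⟩, ⟨z, hz1⟩⟩ := hx
    have e1 : q1 / i * i = q1 := by rw [hx1, Nat.mul_div_cancel_left _ (by omega)]; ring
    have e2 : q2 / j * j = q2 := by rw [hy1, Nat.mul_div_cancel_left _ (by omega)]; ring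
    have e3 : p2 / l * l = p2 := by rw [hz1, Nat.mul_div_cancel_left _ (by omega)]; ring
    simp only [e1, e2, e3, hq]
  · rintro ⟨a, b, c⟩ hx
    simp only [Nat.mul_div_cancel _ (show 0 < i by omega),
      Nat.mul_div_cancel _ (show 0 < j by omega), Nat.mul_div_cancel _ (show 0 < l by omega)]


abbrev T5 := ℕ × ℕ × ℕ × ℕ × ℕ

-- components: t s i j r
def B5 (m : ℕ) : Finset T5 := Icc 1 m ×ˢ Icc 1 m ×ˢ Icc 1 m ×ˢ Icc 1 m ×ˢ Icc 1 m

lemma mem_B5 {m : ℕ} {x : T5} : x ∈ B5 m ↔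
    (1 ≤ x.1 ∧ x.1 ≤ m) ∧ (1 ≤ x.2.1 ∧ x.2.1 ≤ m) ∧ (1 ≤ x.2.2.1 ∧ x.2.2.1 ≤ m)
      ∧ (1 ≤ x.2.2.2.1 ∧ x.2.2.2.1 ≤ m) ∧ (1 ≤ x.2.2.2.2 ∧ x.2.2.2.2 ≤ m) := by
  simp [B5, Finset.mem_product, Finset.mem_Icc, and_assoc]

lemma card_filter_split {α : Type*} (s : Finset α) (P Q : α → Prop) [DecidablePred P]
    [DecidablePred Q] :
    #(s.filter P) = #(s.filter fun x => P x ∧ Q x) + #(s.filter fun x => P x ∧ ¬ Q x) := by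
  rw [← Finset.filter_filter, ← Finset.filter_filter,
    Finset.card_filter_add_card_filter_not]

-- BIJ1
lemma bij1 (m : ℕ) :
    #((B5 m).filter fun x => x.1 * x.2.2.1 + x.2.1 * x.2.2.2.1 = m ∧ x.2.2.2.1 < x.2.2.1
        ∧ x.2.2.2.2 ≤ x.1 + x.2.1)
    = #((B5 m).filter fun x => x.1 * x.2.2.1 + x.2.1 * x.2.2.2.1 = m ∧ x.1 < x.2.1
        ∧ x.2.2.2.2 ≤ x.2.1) := by
  apply Finset.card_nbij'
    (i := fun x => (x.1, x.1 + x.2.1, x.2.2.1 - x.2.2.2.1, x.2.2.2.1, x.2.2.2.2))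
    (j := fun x => (x.1, x.2.1 - x.1, x.2.2.1 + x.2.2.2.1, x.2.2.2.1, x.2.2.2.2))
  · rintro ⟨t, s, i, j, r⟩ hx
    simp only [Finset.mem_coe, Finset.mem_filter, mem_B5] at hx ⊢
    obtain ⟨hb, heq, hij, hr⟩ := hx
    obtain ⟨⟨ht1, ht2⟩, ⟨hs1, hs2⟩, ⟨hi1, hi2⟩, ⟨hj1, hj2⟩, ⟨hr1, hr2⟩⟩ := hb
    have hts : t + s ≤ m := by
      have h1 : t * 1 ≤ t * i := Nat.mul_le_mul_left t hi1
      have h2 : s * 1 ≤ s * j := Nat.mul_le_mul_left s hj1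
      simp only [Nat.mul_one] at h1 h2
      omega
    obtain ⟨d, hd⟩ : ∃ d, i = j + d ∧ 1 ≤ d := ⟨i - j, by omega⟩
    obtain ⟨hd1, hd2⟩ := hd
    subst hd1
    have key : t * d + (t + s) * j = t * (j + d) + s * j := by ring
    refine ⟨⟨⟨by omega, by omega⟩, ⟨by omega, by omega⟩, ⟨by omega, by omega⟩,
      ⟨by omega, by omega⟩, ⟨by omega, by omega⟩⟩, ?_, by omega, by omega⟩
    simp only [show j + d - j = d by omega]
    omega
  · rintro ⟨t, s, i, j, r⟩ hx
    simp only [Finset.mem_coe, Finset.mem_filter, mem_B5] at hx ⊢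
    obtain ⟨hb, heq, hts, hr⟩ := hx
    obtain ⟨⟨ht1, ht2⟩, ⟨hs1, hs2⟩, ⟨hi1, hi2⟩, ⟨hj1, hj2⟩, ⟨hr1, hr2⟩⟩ := hb
    have hij : i + j ≤ m := by
      have h1 : t * 1 ≤ t * i := Nat.mul_le_mul_left t hi1
      have h2 : s * 1 ≤ s * j := Nat.mul_le_mul_left s hj1
      have h3 : 1 * i ≤ t * i := Nat.mul_le_mul_right i ht1
      have h4 : 1 * j ≤ s * j := Nat.mul_le_mul_right j hs1
      simp only [Nat.mul_one, Nat.one_mul] at h1 h2 h3 h4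
      omega
    obtain ⟨e, he1, he2⟩ : ∃ e, s = t + e ∧ 1 ≤ e := ⟨s - t, by omega⟩
    subst he1
    have key : t * (i + j) + e * j = t * i + (t + e) * j := by ring
    refine ⟨⟨⟨by omega, by omega⟩, ⟨by omega, by omega⟩, ⟨by omega, by omega⟩,
      ⟨by omega, by omega⟩, ⟨by omega, by omega⟩⟩, ?_, by omega, by omega⟩
    simp only [show t + e - t = e by omega]
    omega
  · rintro ⟨t, s, i, j, r⟩ hx
    simp only [Finset.mem_coe, Finset.mem_filter, mem_B5] at hx
    obtain ⟨hb, heq, hij, hr⟩ := hx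
    show (t, t + s - t, i - j + j, j, r) = (t, s, i, j, r)
    rw [show t + s - t = s from by omega, show i - j + j = i from by omega]
  · rintro ⟨t, s, i, j, r⟩ hx
    simp only [Finset.mem_coe, Finset.mem_filter, mem_B5] at hx
    obtain ⟨hb, heq, hts, hr⟩ := hx
    show (t, t + (s - t), i + j - j, j, r) = (t, s, i, j, r)
    rw [show t + (s - t) = s from by omega, show i + j - j = i from by omega]




lemma ts_le {m t s i j : ℕ} (h : t * i + s * j = m) (hi : 1 ≤ i) (hj : 1 ≤ j) :
    t + s ≤ m := by
  have h1 : t * 1 ≤ t * i := Nat.mul_le_mul_left t hi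
  have h2 : s * 1 ≤ s * j := Nat.mul_le_mul_left s hj
  simp only [Nat.mul_one] at h1 h2
  omega

lemma ij_le {m t s i j : ℕ} (h : t * i + s * j = m) (ht : 1 ≤ t) (hs : 1 ≤ s) :
    i + j ≤ m := by
  have h1 : 1 * i ≤ t * i := Nat.mul_le_mul_right i ht
  have h2 : 1 * j ≤ s * j := Nat.mul_le_mul_right j hs
  simp only [Nat.one_mul] at h1 h2
  omega

-- BIJ2 : {i<j, r ≤ t+s} ≅ {s<t, r ≤ t}
lemma bij2 (m : ℕ) :
    #((B5 m).filter fun x => x.1 * x.2.2.1 + x.2.1 * x.2.2.2.1 = m ∧ x.2.2.1 < x.2.2.2.1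
        ∧ x.2.2.2.2 ≤ x.1 + x.2.1)
    = #((B5 m).filter fun x => x.1 * x.2.2.1 + x.2.1 * x.2.2.2.1 = m ∧ x.2.1 < x.1
        ∧ x.2.2.2.2 ≤ x.1) := by
  apply Finset.card_nbij'
    (i := fun x => (x.1 + x.2.1, x.2.1, x.2.2.1, x.2.2.2.1 - x.2.2.1, x.2.2.2.2))
    (j := fun x => (x.1 - x.2.1, x.2.1, x.2.2.1, x.2.2.2.1 + x.2.2.1, x.2.2.2.2))
  · rintro ⟨t, s, i, j, r⟩ hx
    simp only [Finset.mem_coe, Finset.mem_filter, mem_B5] at hx ⊢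
    obtain ⟨⟨⟨ht1, ht2⟩, ⟨hs1, hs2⟩, ⟨hi1, hi2⟩, ⟨hj1, hj2⟩, ⟨hr1, hr2⟩⟩, heq, hij, hr⟩ := hx
    have hts := ts_le heq hi1 hj1
    obtain ⟨d, hd1, hd2⟩ : ∃ d, j = i + d ∧ 1 ≤ d := ⟨j - i, by omega⟩
    subst hd1
    have key : (t + s) * i + s * d = t * i + s * (i + d) := by ring
    refine ⟨⟨⟨by omega, by omega⟩, ⟨by omega, by omega⟩, ⟨by omega, by omega⟩,
      ⟨by omega, by omega⟩, ⟨by omega, by omega⟩⟩, ?_, by omega, by omega⟩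
    rw [show i + d - i = d from by omega]
    omega
  · rintro ⟨t, s, i, j, r⟩ hx
    simp only [Finset.mem_coe, Finset.mem_filter, mem_B5] at hx ⊢
    obtain ⟨⟨⟨ht1, ht2⟩, ⟨hs1, hs2⟩, ⟨hi1, hi2⟩, ⟨hj1, hj2⟩, ⟨hr1, hr2⟩⟩, heq, hst, hr⟩ := hx
    have hij := ij_le heq ht1 hs1
    obtain ⟨e, he1, he2⟩ : ∃ e, t = s + e ∧ 1 ≤ e := ⟨t - s, by omega⟩
    subst he1
    have key : e * i + s * (j + i) = (s + e) * i + s * j := by ring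
    refine ⟨⟨⟨by omega, by omega⟩, ⟨by omega, by omega⟩, ⟨by omega, by omega⟩,
      ⟨by omega, by omega⟩, ⟨by omega, by omega⟩⟩, ?_, by omega, by omega⟩
    rw [show s + e - s = e from by omega]
    omega
  · rintro ⟨t, s, i, j, r⟩ hx
    simp only [Finset.mem_coe, Finset.mem_filter, mem_B5] at hx
    obtain ⟨hb, heq, hij, hr⟩ := hx
    show (t + s - s, s, i, j - i + i, r) = (t, s, i, j, r)
    rw [show t + s - s = t from by omega, show j - i + i = j from by omega]
  · rintro ⟨t, s, i, j, r⟩ hx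
    simp only [Finset.mem_coe, Finset.mem_filter, mem_B5] at hx
    obtain ⟨hb, heq, hst, hr⟩ := hx
    show (t - s + s, s, i, j + i - i, r) = (t, s, i, j, r)
    rw [show t - s + s = t from by omega, show j + i - i = j from by omega]

-- BIJ3 : {t<s, s<r≤t+s} ≅ {t<s, r≤t}
lemma bij3 (m : ℕ) :
    #((B5 m).filter fun x => x.1 * x.2.2.1 + x.2.1 * x.2.2.2.1 = m ∧ x.1 < x.2.1
        ∧ ¬ x.2.2.2.2 ≤ x.2.1 ∧ x.2.2.2.2 ≤ x.1 + x.2.1)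
    = #((B5 m).filter fun x => x.1 * x.2.2.1 + x.2.1 * x.2.2.2.1 = m ∧ x.1 < x.2.1
        ∧ x.2.2.2.2 ≤ x.1) := by
  apply Finset.card_nbij'
    (i := fun x => (x.1, x.2.1, x.2.2.1, x.2.2.2.1, x.2.2.2.2 - x.2.1))
    (j := fun x => (x.1, x.2.1, x.2.2.1, x.2.2.2.1, x.2.2.2.2 + x.2.1))
  · rintro ⟨t, s, i, j, r⟩ hx
    simp only [Finset.mem_coe, Finset.mem_filter, mem_B5] at hx ⊢
    obtain ⟨⟨⟨ht1, ht2⟩, ⟨hs1, hs2⟩, ⟨hi1, hi2⟩, ⟨hj1, hj2⟩, ⟨hr1, hr2⟩⟩, heq, hst, hr3, hr4⟩ := hx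
    exact ⟨⟨⟨by omega, by omega⟩, ⟨by omega, by omega⟩, ⟨by omega, by omega⟩,
      ⟨by omega, by omega⟩, ⟨by omega, by omega⟩⟩, heq, by omega, by omega⟩
  · rintro ⟨t, s, i, j, r⟩ hx
    simp only [Finset.mem_coe, Finset.mem_filter, mem_B5] at hx ⊢
    obtain ⟨⟨⟨ht1, ht2⟩, ⟨hs1, hs2⟩, ⟨hi1, hi2⟩, ⟨hj1, hj2⟩, ⟨hr1, hr2⟩⟩, heq, hst, hr3⟩ := hx
    have hts := ts_le heq hi1 hj1
    exact ⟨⟨⟨by omega, by omega⟩, ⟨by omega, by omega⟩, ⟨by omega, by omega⟩,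
      ⟨by omega, by omega⟩, ⟨by omega, by omega⟩⟩, heq, by omega, by omega, by omega⟩
  · rintro ⟨t, s, i, j, r⟩ hx
    simp only [Finset.mem_coe, Finset.mem_filter, mem_B5] at hx
    obtain ⟨hb, heq, hst, hr3, hr4⟩ := hx
    show (t, s, i, j, r - s + s) = (t, s, i, j, r)
    rw [show r - s + s = r from by omega]
  · rintro ⟨t, s, i, j, r⟩ hx
    simp only [Finset.mem_coe, Finset.mem_filter, mem_B5] at hx
    obtain ⟨hb, heq, hst, hr3⟩ := hx
    show (t, s, i, j, r + s - s) = (t, s, i, j, r)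
    rw [show r + s - s = r from by omega]

-- BIJ4 : {s<t, t<r≤t+s} ≅ {s<t, r≤s}
lemma bij4 (m : ℕ) :
    #((B5 m).filter fun x => x.1 * x.2.2.1 + x.2.1 * x.2.2.2.1 = m ∧ x.2.1 < x.1
        ∧ ¬ x.2.2.2.2 ≤ x.1 ∧ x.2.2.2.2 ≤ x.1 + x.2.1)
    = #((B5 m).filter fun x => x.1 * x.2.2.1 + x.2.1 * x.2.2.2.1 = m ∧ x.2.1 < x.1
        ∧ x.2.2.2.2 ≤ x.2.1) := by
  apply Finset.card_nbij'
    (i := fun x => (x.1, x.2.1, x.2.2.1, x.2.2.2.1, x.2.2.2.2 - x.1))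
    (j := fun x => (x.1, x.2.1, x.2.2.1, x.2.2.2.1, x.2.2.2.2 + x.1))
  · rintro ⟨t, s, i, j, r⟩ hx
    simp only [Finset.mem_coe, Finset.mem_filter, mem_B5] at hx ⊢
    obtain ⟨⟨⟨ht1, ht2⟩, ⟨hs1, hs2⟩, ⟨hi1, hi2⟩, ⟨hj1, hj2⟩, ⟨hr1, hr2⟩⟩, heq, hst, hr3, hr4⟩ := hx
    exact ⟨⟨⟨by omega, by omega⟩, ⟨by omega, by omega⟩, ⟨by omega, by omega⟩,
      ⟨by omega, by omega⟩, ⟨by omega, by omega⟩⟩, heq, by omega, by omega⟩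
  · rintro ⟨t, s, i, j, r⟩ hx
    simp only [Finset.mem_coe, Finset.mem_filter, mem_B5] at hx ⊢
    obtain ⟨⟨⟨ht1, ht2⟩, ⟨hs1, hs2⟩, ⟨hi1, hi2⟩, ⟨hj1, hj2⟩, ⟨hr1, hr2⟩⟩, heq, hst, hr3⟩ := hx
    have hts := ts_le heq hi1 hj1
    exact ⟨⟨⟨by omega, by omega⟩, ⟨by omega, by omega⟩, ⟨by omega, by omega⟩,
      ⟨by omega, by omega⟩, ⟨by omega, by omega⟩⟩, heq, by omega, by omega, by omega⟩
  · rintro ⟨t, s, i, j, r⟩ hx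
    simp only [Finset.mem_coe, Finset.mem_filter, mem_B5] at hx
    obtain ⟨hb, heq, hst, hr3, hr4⟩ := hx
    show (t, s, i, j, r - t + t) = (t, s, i, j, r)
    rw [show r - t + t = r from by omega]
  · rintro ⟨t, s, i, j, r⟩ hx
    simp only [Finset.mem_coe, Finset.mem_filter, mem_B5] at hx
    obtain ⟨hb, heq, hst, hr3⟩ := hx
    show (t, s, i, j, r + t - t) = (t, s, i, j, r)
    rw [show r + t - t = r from by omega]

-- BIJ5 : {t=s, t<r≤t+s} ≅ {t=s, r≤t}
lemma bij5 (m : ℕ) :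
    #((B5 m).filter fun x => x.1 * x.2.2.1 + x.2.1 * x.2.2.2.1 = m ∧ x.1 = x.2.1
        ∧ ¬ x.2.2.2.2 ≤ x.1 ∧ x.2.2.2.2 ≤ x.1 + x.2.1)
    = #((B5 m).filter fun x => x.1 * x.2.2.1 + x.2.1 * x.2.2.2.1 = m ∧ x.1 = x.2.1
        ∧ x.2.2.2.2 ≤ x.1) := by
  apply Finset.card_nbij'
    (i := fun x => (x.1, x.2.1, x.2.2.1, x.2.2.2.1, x.2.2.2.2 - x.1))
    (j := fun x => (x.1, x.2.1, x.2.2.1, x.2.2.2.1, x.2.2.2.2 + x.1))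
  · rintro ⟨t, s, i, j, r⟩ hx
    simp only [Finset.mem_coe, Finset.mem_filter, mem_B5] at hx ⊢
    obtain ⟨⟨⟨ht1, ht2⟩, ⟨hs1, hs2⟩, ⟨hi1, hi2⟩, ⟨hj1, hj2⟩, ⟨hr1, hr2⟩⟩, heq, hst, hr3, hr4⟩ := hx
    exact ⟨⟨⟨by omega, by omega⟩, ⟨by omega, by omega⟩, ⟨by omega, by omega⟩,
      ⟨by omega, by omega⟩, ⟨by omega, by omega⟩⟩, heq, by omega, by omega⟩
  · rintro ⟨t, s, i, j, r⟩ hx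
    simp only [Finset.mem_coe, Finset.mem_filter, mem_B5] at hx ⊢
    obtain ⟨⟨⟨ht1, ht2⟩, ⟨hs1, hs2⟩, ⟨hi1, hi2⟩, ⟨hj1, hj2⟩, ⟨hr1, hr2⟩⟩, heq, hst, hr3⟩ := hx
    have hts := ts_le heq hi1 hj1
    exact ⟨⟨⟨by omega, by omega⟩, ⟨by omega, by omega⟩, ⟨by omega, by omega⟩,
      ⟨by omega, by omega⟩, ⟨by omega, by omega⟩⟩, heq, by omega, by omega, by omega⟩
  · rintro ⟨t, s, i, j, r⟩ hx
    simp only [Finset.mem_coe, Finset.mem_filter, mem_B5] at hx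
    obtain ⟨hb, heq, hst, hr3, hr4⟩ := hx
    show (t, s, i, j, r - t + t) = (t, s, i, j, r)
    rw [show r - t + t = r from by omega]
  · rintro ⟨t, s, i, j, r⟩ hx
    simp only [Finset.mem_coe, Finset.mem_filter, mem_B5] at hx
    obtain ⟨hb, heq, hst, hr3⟩ := hx
    show (t, s, i, j, r + t - t) = (t, s, i, j, r)
    rw [show r + t - t = r from by omega]



lemma card_filter_iff {α : Type*} (s : Finset α) (P Q : α → Prop) [DecidablePred P]
    [DecidablePred Q] (h : ∀ x, P x ↔ Q x) : #(s.filter P) = #(s.filter Q) := by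
  congr 1
  exact Finset.filter_congr fun x _ => h x

lemma key2 (m : ℕ) :
    #((B5 m).filter fun x => x.1 * x.2.2.1 + x.2.1 * x.2.2.2.1 = m ∧ x.2.2.1 = x.2.2.2.1
        ∧ x.2.2.2.2 ≤ x.1 + x.2.1)
    = #((B5 m).filter fun x => x.1 * x.2.2.1 + x.2.1 * x.2.2.2.1 = m
        ∧ x.2.2.2.2 ≤ x.1 ∧ x.2.2.2.2 ≤ x.2.1)
      + #((B5 m).filter fun x => x.1 * x.2.2.1 + x.2.1 * x.2.2.2.1 = m ∧ x.1 = x.2.1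
        ∧ x.2.2.2.2 ≤ x.1) := by
  set C0 : T5 → Prop := fun x => x.1 * x.2.2.1 + x.2.1 * x.2.2.2.1 = m with hC0
  -- EQ-I : partition of A by i ? j
  have eqI : #((B5 m).filter fun x => C0 x ∧ x.2.2.2.2 ≤ x.1 + x.2.1)
      = #((B5 m).filter fun x => C0 x ∧ x.2.2.2.1 < x.2.2.1 ∧ x.2.2.2.2 ≤ x.1 + x.2.1)
      + #((B5 m).filter fun x => C0 x ∧ x.2.2.1 < x.2.2.2.1 ∧ x.2.2.2.2 ≤ x.1 + x.2.1)
      + #((B5 m).filter fun x => C0 x ∧ x.2.2.1 = x.2.2.2.1 ∧ x.2.2.2.2 ≤ x.1 + x.2.1) := by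
    rw [card_filter_split (B5 m) _ (fun x => x.2.2.2.1 < x.2.2.1),
      card_filter_split (B5 m) (fun x => (C0 x ∧ x.2.2.2.2 ≤ x.1 + x.2.1) ∧ ¬ x.2.2.2.1 < x.2.2.1)
        (fun x => x.2.2.1 < x.2.2.2.1)]
    rw [card_filter_iff (B5 m)
      (fun x => (C0 x ∧ x.2.2.2.2 ≤ x.1 + x.2.1) ∧ x.2.2.2.1 < x.2.2.1)
      (fun x => C0 x ∧ x.2.2.2.1 < x.2.2.1 ∧ x.2.2.2.2 ≤ x.1 + x.2.1) (fun x => by tauto)]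
    rw [card_filter_iff (B5 m)
      (fun x => ((C0 x ∧ x.2.2.2.2 ≤ x.1 + x.2.1) ∧ ¬ x.2.2.2.1 < x.2.2.1) ∧ x.2.2.1 < x.2.2.2.1)
      (fun x => C0 x ∧ x.2.2.1 < x.2.2.2.1 ∧ x.2.2.2.2 ≤ x.1 + x.2.1) (fun x => by
        constructor
        · rintro ⟨⟨⟨h0, h1⟩, h2⟩, h3⟩; exact ⟨h0, h3, h1⟩
        · rintro ⟨h0, h3, h1⟩; exact ⟨⟨⟨h0, h1⟩, by omega⟩, h3⟩)]
    rw [card_filter_iff (B5 m)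
      (fun x => ((C0 x ∧ x.2.2.2.2 ≤ x.1 + x.2.1) ∧ ¬ x.2.2.2.1 < x.2.2.1) ∧ ¬ x.2.2.1 < x.2.2.2.1)
      (fun x => C0 x ∧ x.2.2.1 = x.2.2.2.1 ∧ x.2.2.2.2 ≤ x.1 + x.2.1) (fun x => by
        constructor
        · rintro ⟨⟨⟨h0, h1⟩, h2⟩, h3⟩; exact ⟨h0, by omega, h1⟩
        · rintro ⟨h0, h3, h1⟩; exact ⟨⟨⟨h0, h1⟩, by omega⟩, by omega⟩)]
    omega
  -- EQ-II : partition of A by t ? s and r-threshold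
  have eqII : #((B5 m).filter fun x => C0 x ∧ x.2.2.2.2 ≤ x.1 + x.2.1)
      = #((B5 m).filter fun x => C0 x ∧ x.1 < x.2.1 ∧ x.2.2.2.2 ≤ x.2.1)
      + #((B5 m).filter fun x => C0 x ∧ x.1 < x.2.1 ∧ ¬ x.2.2.2.2 ≤ x.2.1
            ∧ x.2.2.2.2 ≤ x.1 + x.2.1)
      + (#((B5 m).filter fun x => C0 x ∧ x.2.1 < x.1 ∧ x.2.2.2.2 ≤ x.1)
      + #((B5 m).filter fun x => C0 x ∧ x.2.1 < x.1 ∧ ¬ x.2.2.2.2 ≤ x.1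
            ∧ x.2.2.2.2 ≤ x.1 + x.2.1))
      + (#((B5 m).filter fun x => C0 x ∧ x.1 = x.2.1 ∧ x.2.2.2.2 ≤ x.1)
      + #((B5 m).filter fun x => C0 x ∧ x.1 = x.2.1 ∧ ¬ x.2.2.2.2 ≤ x.1
            ∧ x.2.2.2.2 ≤ x.1 + x.2.1)) := by
    rw [card_filter_split (B5 m) _ (fun x => x.1 < x.2.1),
      card_filter_split (B5 m) (fun x => (C0 x ∧ x.2.2.2.2 ≤ x.1 + x.2.1) ∧ ¬ x.1 < x.2.1)
        (fun x => x.2.1 < x.1)]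
    have p1 : #((B5 m).filter fun x => (C0 x ∧ x.2.2.2.2 ≤ x.1 + x.2.1) ∧ x.1 < x.2.1)
        = #((B5 m).filter fun x => C0 x ∧ x.1 < x.2.1 ∧ x.2.2.2.2 ≤ x.2.1)
        + #((B5 m).filter fun x => C0 x ∧ x.1 < x.2.1 ∧ ¬ x.2.2.2.2 ≤ x.2.1
            ∧ x.2.2.2.2 ≤ x.1 + x.2.1) := by
      rw [card_filter_split (B5 m) (fun x => (C0 x ∧ x.2.2.2.2 ≤ x.1 + x.2.1) ∧ x.1 < x.2.1)
        (fun x => x.2.2.2.2 ≤ x.2.1)]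
      congr 1
      · exact card_filter_iff _ _ _ (fun x => by
          constructor
          · rintro ⟨⟨⟨h0, h1⟩, h2⟩, h3⟩; exact ⟨h0, h2, h3⟩
          · rintro ⟨h0, h2, h3⟩; exact ⟨⟨⟨h0, by omega⟩, h2⟩, h3⟩)
      · exact card_filter_iff _ _ _ (fun x => by
          constructor
          · rintro ⟨⟨⟨h0, h1⟩, h2⟩, h3⟩; exact ⟨h0, h2, h3, h1⟩
          · rintro ⟨h0, h2, h3, h1⟩; exact ⟨⟨⟨h0, h1⟩, h2⟩, h3⟩)
    have p2 : #((B5 m).filter fun x =>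
          ((C0 x ∧ x.2.2.2.2 ≤ x.1 + x.2.1) ∧ ¬ x.1 < x.2.1) ∧ x.2.1 < x.1)
        = #((B5 m).filter fun x => C0 x ∧ x.2.1 < x.1 ∧ x.2.2.2.2 ≤ x.1)
        + #((B5 m).filter fun x => C0 x ∧ x.2.1 < x.1 ∧ ¬ x.2.2.2.2 ≤ x.1
            ∧ x.2.2.2.2 ≤ x.1 + x.2.1) := by
      rw [card_filter_split (B5 m)
        (fun x => ((C0 x ∧ x.2.2.2.2 ≤ x.1 + x.2.1) ∧ ¬ x.1 < x.2.1) ∧ x.2.1 < x.1)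
        (fun x => x.2.2.2.2 ≤ x.1)]
      congr 1
      · exact card_filter_iff _ _ _ (fun x => by
          constructor
          · rintro ⟨⟨⟨⟨h0, h1⟩, h2⟩, h3⟩, h4⟩; exact ⟨h0, h3, h4⟩
          · rintro ⟨h0, h3, h4⟩; exact ⟨⟨⟨⟨h0, by omega⟩, by omega⟩, h3⟩, h4⟩)
      · exact card_filter_iff _ _ _ (fun x => by
          constructor
          · rintro ⟨⟨⟨⟨h0, h1⟩, h2⟩, h3⟩, h4⟩; exact ⟨h0, h3, h4, h1⟩
          · rintro ⟨h0, h3, h4, h1⟩; exact ⟨⟨⟨⟨h0, h1⟩, by omega⟩, h3⟩, h4⟩)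
    have p3 : #((B5 m).filter fun x =>
          ((C0 x ∧ x.2.2.2.2 ≤ x.1 + x.2.1) ∧ ¬ x.1 < x.2.1) ∧ ¬ x.2.1 < x.1)
        = #((B5 m).filter fun x => C0 x ∧ x.1 = x.2.1 ∧ x.2.2.2.2 ≤ x.1)
        + #((B5 m).filter fun x => C0 x ∧ x.1 = x.2.1 ∧ ¬ x.2.2.2.2 ≤ x.1
            ∧ x.2.2.2.2 ≤ x.1 + x.2.1) := by
      rw [card_filter_split (B5 m)
        (fun x => ((C0 x ∧ x.2.2.2.2 ≤ x.1 + x.2.1) ∧ ¬ x.1 < x.2.1) ∧ ¬ x.2.1 < x.1)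
        (fun x => x.2.2.2.2 ≤ x.1)]
      congr 1
      · exact card_filter_iff _ _ _ (fun x => by
          constructor
          · rintro ⟨⟨⟨⟨h0, h1⟩, h2⟩, h3⟩, h4⟩; exact ⟨h0, by omega, h4⟩
          · rintro ⟨h0, h3, h4⟩; exact ⟨⟨⟨⟨h0, by omega⟩, by omega⟩, by omega⟩, h4⟩)
      · exact card_filter_iff _ _ _ (fun x => by
          constructor
          · rintro ⟨⟨⟨⟨h0, h1⟩, h2⟩, h3⟩, h4⟩; exact ⟨h0, by omega, h4, h1⟩
          · rintro ⟨h0, h3, h4, h1⟩; exact ⟨⟨⟨⟨h0, h1⟩, by omega⟩, by omega⟩, h4⟩)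
    omega
  -- QF partition
  have eqQF : #((B5 m).filter fun x => C0 x ∧ x.2.2.2.2 ≤ x.1 ∧ x.2.2.2.2 ≤ x.2.1)
      = #((B5 m).filter fun x => C0 x ∧ x.1 < x.2.1 ∧ x.2.2.2.2 ≤ x.1)
      + #((B5 m).filter fun x => C0 x ∧ x.2.1 < x.1 ∧ x.2.2.2.2 ≤ x.2.1)
      + #((B5 m).filter fun x => C0 x ∧ x.1 = x.2.1 ∧ x.2.2.2.2 ≤ x.1) := by
    rw [card_filter_split (B5 m) _ (fun x => x.1 < x.2.1),
      card_filter_split (B5 m)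
        (fun x => (C0 x ∧ x.2.2.2.2 ≤ x.1 ∧ x.2.2.2.2 ≤ x.2.1) ∧ ¬ x.1 < x.2.1)
        (fun x => x.2.1 < x.1)]
    rw [card_filter_iff (B5 m)
      (fun x => (C0 x ∧ x.2.2.2.2 ≤ x.1 ∧ x.2.2.2.2 ≤ x.2.1) ∧ x.1 < x.2.1)
      (fun x => C0 x ∧ x.1 < x.2.1 ∧ x.2.2.2.2 ≤ x.1) (fun x => by
        constructor
        · rintro ⟨⟨h0, h1, h2⟩, h3⟩; exact ⟨h0, h3, h1⟩
        · rintro ⟨h0, h3, h1⟩; exact ⟨⟨h0, h1, by omega⟩, h3⟩)]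
    rw [card_filter_iff (B5 m)
      (fun x => ((C0 x ∧ x.2.2.2.2 ≤ x.1 ∧ x.2.2.2.2 ≤ x.2.1) ∧ ¬ x.1 < x.2.1) ∧ x.2.1 < x.1)
      (fun x => C0 x ∧ x.2.1 < x.1 ∧ x.2.2.2.2 ≤ x.2.1) (fun x => by
        constructor
        · rintro ⟨⟨⟨h0, h1, h2⟩, h3⟩, h4⟩; exact ⟨h0, h4, h2⟩
        · rintro ⟨h0, h4, h2⟩; exact ⟨⟨⟨h0, by omega, h2⟩, by omega⟩, h4⟩)]
    rw [card_filter_iff (B5 m)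
      (fun x => ((C0 x ∧ x.2.2.2.2 ≤ x.1 ∧ x.2.2.2.2 ≤ x.2.1) ∧ ¬ x.1 < x.2.1) ∧ ¬ x.2.1 < x.1)
      (fun x => C0 x ∧ x.1 = x.2.1 ∧ x.2.2.2.2 ≤ x.1) (fun x => by
        constructor
        · rintro ⟨⟨⟨h0, h1, h2⟩, h3⟩, h4⟩; exact ⟨h0, by omega, h1⟩
        · rintro ⟨h0, h4, h1⟩; exact ⟨⟨⟨h0, h1, by omega⟩, by omega⟩, by omega⟩)]
    omega
  have b1 := bij1 m; have b2 := bij2 m; have b3 := bij3 m; have b4 := bij4 m; have b5 := bij5 m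
  simp only [hC0] at eqI eqII eqQF
  omega

def DivS (m : ℕ) : Finset (ℕ × ℕ) := (Icc 1 m ×ˢ Icc 1 m).filter fun p => p.1 * p.2 = m

lemma mem_DivS {m : ℕ} {p : ℕ × ℕ} : p ∈ DivS m ↔
    (1 ≤ p.1 ∧ p.1 ≤ m) ∧ (1 ≤ p.2 ∧ p.2 ≤ m) ∧ p.1 * p.2 = m := by
  simp [DivS, Finset.mem_product, Finset.mem_Icc, and_assoc]

-- diagonal i = j set
lemma diag_card (m : ℕ) :
    #((B5 m).filter fun x => x.1 * x.2.2.1 + x.2.1 * x.2.2.2.1 = m ∧ x.2.2.1 = x.2.2.2.1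
        ∧ x.2.2.2.2 ≤ x.1 + x.2.1)
    = ∑ p ∈ DivS m, (p.2 - 1) * p.2 := by
  rw [show (∑ p ∈ DivS m, (p.2 - 1) * p.2) = ∑ p ∈ DivS m, #(Icc 1 (p.2 - 1) ×ˢ Icc 1 p.2)
    from Finset.sum_congr rfl fun p _ => by
      rw [Finset.card_product, Nat.card_Icc, Nat.card_Icc, Nat.add_sub_cancel,
        Nat.add_sub_cancel],
    ← Finset.card_sigma (DivS m) (fun p => Icc 1 (p.2 - 1) ×ˢ Icc 1 p.2)]
  · apply Finset.card_nbij'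
      (i := fun x : T5 => (⟨(x.2.2.1, x.1 + x.2.1), (x.1, x.2.2.2.2)⟩ : Σ _ : ℕ × ℕ, ℕ × ℕ))
      (j := fun y : Σ _ : ℕ × ℕ, ℕ × ℕ => (y.2.1, y.1.2 - y.2.1, y.1.1, y.1.1, y.2.2))
    · rintro ⟨t, s, i, j, r⟩ hx
      simp only [Finset.mem_coe, Finset.mem_filter, mem_B5] at hx
      obtain ⟨⟨⟨ht1, ht2⟩, ⟨hs1, hs2⟩, ⟨hi1, hi2⟩, ⟨hj1, hj2⟩, ⟨hr1, hr2⟩⟩, heq, hij, hr⟩ := hx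
      subst hij
      simp only [Finset.mem_coe, Finset.mem_sigma, mem_DivS, Finset.mem_product, Finset.mem_Icc]
      have hts := ts_le heq hi1 hi1
      have key : i * (t + s) = t * i + s * i := by ring
      exact ⟨⟨⟨hi1, hi2⟩, ⟨by omega, hts⟩, by rw [key]; exact heq⟩,
        ⟨by omega, by omega⟩, by omega, by omega⟩
    · rintro ⟨⟨d, e⟩, ⟨t, r⟩⟩ hy
      simp only [Finset.mem_coe, Finset.mem_sigma, mem_DivS, Finset.mem_product, Finset.mem_Icc] at hy
      obtain ⟨⟨⟨hd1, hd2⟩, ⟨he1, he2⟩, hde⟩, ⟨ht1, ht2⟩, hr1, hr2⟩ := hy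
      simp only [Finset.mem_coe, Finset.mem_filter, mem_B5]
      obtain ⟨f, hf1, hf2⟩ : ∃ f, e = t + f ∧ 1 ≤ f := ⟨e - t, by omega⟩
      have key : t * d + (e - t) * d = e * d := by
        rw [hf1, show t + f - t = f from by omega]; ring
      have hm : e * d = m := by rw [← hde]; ring
      refine ⟨⟨⟨by omega, by omega⟩, ⟨by omega, by omega⟩, ⟨by omega, by omega⟩,
        ⟨by omega, by omega⟩, ⟨by omega, by omega⟩⟩, by rw [key]; exact hm, trivial, by omega⟩
    · rintro ⟨t, s, i, j, r⟩ hx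
      simp only [Finset.mem_coe, Finset.mem_filter, mem_B5] at hx
      obtain ⟨hb, heq, hij, hr⟩ := hx
      subst hij
      show (t, t + s - t, i, i, r) = (t, s, i, i, r)
      rw [show t + s - t = s from by omega]
    · rintro ⟨⟨d, e⟩, ⟨t, r⟩⟩ hy
      simp only [Finset.mem_coe, Finset.mem_sigma, mem_DivS, Finset.mem_product, Finset.mem_Icc] at hy
      obtain ⟨⟨⟨hd1, hd2⟩, ⟨he1, he2⟩, hde⟩, ⟨ht1, ht2⟩, hr1, hr2⟩ := hy
      show (⟨(d, t + (e - t)), (t, r)⟩ : Σ _ : ℕ × ℕ, ℕ × ℕ) = ⟨(d, e), (t, r)⟩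
      rw [show t + (e - t) = e from by omega]

-- diagonal t = s set
lemma tdiag_card (m : ℕ) :
    #((B5 m).filter fun x => x.1 * x.2.2.1 + x.2.1 * x.2.2.2.1 = m ∧ x.1 = x.2.1
        ∧ x.2.2.2.2 ≤ x.1)
    = ∑ p ∈ DivS m, p.1 * (p.2 - 1) := by
  rw [show (∑ p ∈ DivS m, p.1 * (p.2 - 1)) = ∑ p ∈ DivS m, #(Icc 1 p.1 ×ˢ Icc 1 (p.2 - 1))
    from Finset.sum_congr rfl fun p _ => by
      rw [Finset.card_product, Nat.card_Icc, Nat.card_Icc, Nat.add_sub_cancel,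
        Nat.add_sub_cancel],
    ← Finset.card_sigma (DivS m) (fun p => Icc 1 p.1 ×ˢ Icc 1 (p.2 - 1))]
  · apply Finset.card_nbij'
      (i := fun x : T5 =>
        (⟨(x.1, x.2.2.1 + x.2.2.2.1), (x.2.2.2.2, x.2.2.1)⟩ : Σ _ : ℕ × ℕ, ℕ × ℕ))
      (j := fun y : Σ _ : ℕ × ℕ, ℕ × ℕ => (y.1.1, y.1.1, y.2.2, y.1.2 - y.2.2, y.2.1))
    · rintro ⟨t, s, i, j, r⟩ hx
      simp only [Finset.mem_coe, Finset.mem_filter, mem_B5] at hx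
      obtain ⟨⟨⟨ht1, ht2⟩, ⟨hs1, hs2⟩, ⟨hi1, hi2⟩, ⟨hj1, hj2⟩, ⟨hr1, hr2⟩⟩, heq, hts, hr⟩ := hx
      subst hts
      simp only [Finset.mem_coe, Finset.mem_sigma, mem_DivS, Finset.mem_product, Finset.mem_Icc]
      have hij := ij_le heq ht1 ht1
      have key : t * (i + j) = t * i + t * j := by ring
      exact ⟨⟨⟨ht1, ht2⟩, ⟨by omega, hij⟩, by rw [key]; exact heq⟩,
        ⟨by omega, by omega⟩, by omega, by omega⟩
    · rintro ⟨⟨d, e⟩, ⟨r, i⟩⟩ hy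
      simp only [Finset.mem_coe, Finset.mem_sigma, mem_DivS, Finset.mem_product, Finset.mem_Icc] at hy
      obtain ⟨⟨⟨hd1, hd2⟩, ⟨he1, he2⟩, hde⟩, ⟨hr1, hr2⟩, hi1, hi2⟩ := hy
      simp only [Finset.mem_coe, Finset.mem_filter, mem_B5]
      obtain ⟨f, hf1, hf2⟩ : ∃ f, e = i + f ∧ 1 ≤ f := ⟨e - i, by omega⟩
      have key : d * i + d * (e - i) = d * e := by
        rw [hf1, show i + f - i = f from by omega]; ring
      refine ⟨⟨⟨by omega, by omega⟩, ⟨by omega, by omega⟩, ⟨by omega, by omega⟩,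
        ⟨by omega, by omega⟩, ⟨by omega, by omega⟩⟩, by rw [key]; exact hde, trivial, by omega⟩
    · rintro ⟨t, s, i, j, r⟩ hx
      simp only [Finset.mem_coe, Finset.mem_filter, mem_B5] at hx
      obtain ⟨hb, heq, hts, hr⟩ := hx
      subst hts
      show (t, t, i, i + j - i, r) = (t, t, i, j, r)
      rw [show i + j - i = j from by omega]
    · rintro ⟨⟨d, e⟩, ⟨r, i⟩⟩ hy
      simp only [Finset.mem_coe, Finset.mem_sigma, mem_DivS, Finset.mem_product, Finset.mem_Icc] at hy
      obtain ⟨⟨⟨hd1, hd2⟩, ⟨he1, he2⟩, hde⟩, ⟨hr1, hr2⟩, hi1, hi2⟩ := hy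
      show (⟨(d, i + (e - i)), (r, i)⟩ : Σ _ : ℕ × ℕ, ℕ × ℕ) = ⟨(d, e), (r, i)⟩
      rw [show i + (e - i) = e from by omega]

lemma sum_div_eq (m : ℕ) (f : ℕ → ℕ → ℚ) :
    (∑ n ∈ Icc 1 m, if n ∣ m then f n (m / n) else 0) = ∑ p ∈ DivS m, f p.1 p.2 := by
  rw [← Finset.sum_filter]
  apply Finset.sum_nbij' (i := fun n => (n, m / n)) (j := fun p => p.1)
  · intro n hn
    simp only [Finset.mem_coe, Finset.mem_filter, Finset.mem_Icc] at hn
    obtain ⟨⟨h1, h2⟩, hd⟩ := hn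
    rw [mem_DivS]
    exact ⟨⟨h1, h2⟩, ⟨Nat.div_pos h2 (by omega), Nat.div_le_self m n⟩, Nat.mul_div_cancel' hd⟩
  · intro p hp
    rw [mem_DivS] at hp
    obtain ⟨⟨h1, h2⟩, ⟨h3, h4⟩, hde⟩ := hp
    simp only [Finset.mem_coe, Finset.mem_filter, Finset.mem_Icc]
    exact ⟨⟨h1, h2⟩, ⟨p.2, hde.symm⟩⟩
  · intro n hn
    rfl
  · intro p hp
    rw [mem_DivS] at hp
    obtain ⟨⟨h1, h2⟩, ⟨h3, h4⟩, hde⟩ := hp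
    have : m / p.1 = p.2 := by rw [← hde, Nat.mul_div_cancel_left _ (by omega)]
    show (p.1, m / p.1) = p
    rw [this]
  · intro n hn
    simp only [Finset.mem_coe, Finset.mem_filter, Finset.mem_Icc] at hn
    rfl

lemma div_swap (m : ℕ) (f : ℕ → ℕ → ℚ) :
    ∑ p ∈ DivS m, f p.1 p.2 = ∑ p ∈ DivS m, f p.2 p.1 := by
  apply Finset.sum_nbij' (i := fun p : ℕ × ℕ => (p.2, p.1)) (j := fun p : ℕ × ℕ => (p.2, p.1))
  · intro p hp; rw [mem_DivS] at hp ⊢; refine ⟨hp.2.1, hp.1, by rw [← hp.2.2]; ring⟩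
  · intro p hp; rw [mem_DivS] at hp ⊢; refine ⟨hp.2.1, hp.1, by rw [← hp.2.2]; ring⟩
  · intro p _; rfl
  · intro p _; rfl
  · intro p _; rfl


def U (m i j : ℕ) : Finset (ℕ × ℕ × ℕ) :=
  (range (m+1) ×ˢ range (m+1) ×ˢ range (m+1)).filter
    (fun y => (y.1+1)*i + (y.2.1+1)*j + y.2.2*(i+j) = m)

lemma Usig_card (m : ℕ) :
    #((Icc 1 m ×ˢ Icc 1 m).sigma (fun p => U m p.1 p.2))
    = #((B5 m).filter fun x => x.1 * x.2.2.1 + x.2.1 * x.2.2.2.1 = m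
        ∧ x.2.2.2.2 ≤ x.1 ∧ x.2.2.2.2 ≤ x.2.1) := by
  apply Finset.card_nbij'
    (i := fun y : Σ _ : ℕ × ℕ, ℕ × ℕ × ℕ =>
      (y.2.1 + y.2.2.2 + 1, y.2.2.1 + y.2.2.2 + 1, y.1.1, y.1.2, y.2.2.2 + 1))
    (j := fun x : T5 =>
      (⟨(x.2.2.1, x.2.2.2.1), (x.1 - x.2.2.2.2, x.2.1 - x.2.2.2.2, x.2.2.2.2 - 1)⟩
        : Σ _ : ℕ × ℕ, ℕ × ℕ × ℕ))
  · rintro ⟨⟨i, j⟩, ⟨a, b, c⟩⟩ hy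
    simp only [Finset.mem_coe, Finset.mem_sigma, Finset.mem_product, Finset.mem_Icc, U, Finset.mem_filter,
      Finset.mem_range] at hy
    obtain ⟨⟨⟨hi1, hi2⟩, ⟨hj1, hj2⟩⟩, ⟨ha, hb, hc⟩, heq⟩ := hy
    simp only [Finset.mem_coe, Finset.mem_filter, mem_B5]
    have key : (a + c + 1) * i + (b + c + 1) * j = (a+1)*i + (b+1)*j + c*(i+j) := by ring
    have hkey : (a + c + 1) * i + (b + c + 1) * j = m := by rw [key]; exact heq
    have h1 : a + c + 1 ≤ (a + c + 1) * i := Nat.le_mul_of_pos_right _ (by omega)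
    have h2 : b + c + 1 ≤ (b + c + 1) * j := Nat.le_mul_of_pos_right _ (by omega)
    have h3 : (a + c + 1) * i ≤ m := hkey ▸ Nat.le_add_right _ _
    have h4 : (b + c + 1) * j ≤ m := hkey ▸ Nat.le_add_left _ _
    exact ⟨⟨⟨by omega, by omega⟩, ⟨by omega, by omega⟩, ⟨hi1, hi2⟩, ⟨hj1, hj2⟩,
      ⟨by omega, by omega⟩⟩, hkey, by omega, by omega⟩
  · rintro ⟨t, s, i, j, r⟩ hx
    simp only [Finset.mem_coe, Finset.mem_filter, mem_B5] at hx
    obtain ⟨⟨⟨ht1, ht2⟩, ⟨hs1, hs2⟩, ⟨hi1, hi2⟩, ⟨hj1, hj2⟩, ⟨hr1, hr2⟩⟩, heq, hrt, hrs⟩ := hx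
    simp only [Finset.mem_coe, Finset.mem_sigma, Finset.mem_product, Finset.mem_Icc, U, Finset.mem_filter,
      Finset.mem_range]
    have ht' : t = (t - r) + (r - 1) + 1 := by omega
    have hs' : s = (s - r) + (r - 1) + 1 := by omega
    have key : ((t-r)+1)*i + ((s-r)+1)*j + (r-1)*(i+j)
        = ((t-r)+(r-1)+1)*i + ((s-r)+(r-1)+1)*j := by ring
    refine ⟨⟨⟨hi1, hi2⟩, ⟨hj1, hj2⟩⟩, ⟨by omega, by omega, by omega⟩, ?_⟩
    rw [key, ← ht', ← hs']
    exact heq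
  · rintro ⟨⟨i, j⟩, ⟨a, b, c⟩⟩ hy
    show (⟨(i, j), (a + c + 1 - (c + 1), b + c + 1 - (c + 1), c + 1 - 1)⟩
      : Σ _ : ℕ × ℕ, ℕ × ℕ × ℕ) = ⟨(i, j), (a, b, c)⟩
    rw [show a + c + 1 - (c + 1) = a from by omega, show b + c + 1 - (c + 1) = b from by omega,
      show c + 1 - 1 = c from by omega]
  · rintro ⟨t, s, i, j, r⟩ hx
    simp only [Finset.mem_coe, Finset.mem_filter, mem_B5] at hx
    obtain ⟨⟨⟨ht1, ht2⟩, ⟨hs1, hs2⟩, ⟨hi1, hi2⟩, ⟨hj1, hj2⟩, ⟨hr1, hr2⟩⟩, heq, hrt, hrs⟩ := hx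
    show (t - r + (r - 1) + 1, s - r + (r - 1) + 1, i, j, r - 1 + 1) = (t, s, i, j, r)
    rw [show t - r + (r - 1) + 1 = t from by omega, show s - r + (r - 1) + 1 = s from by omega,
      show r - 1 + 1 = r from by omega]


lemma coeff_LHS_summand {m i j : ℕ} (hi : 1 ≤ i) (hj : 1 ≤ j) :
    coeff m ((G i * G j * G (i+j)) * X ^ (i+j)) = (#(U m i j) : ℚ) := by
  rw [coeff_mul_X_pow']
  by_cases h : i + j ≤ m
  · rw [if_pos h, coeff_GGG_card hi hj (by omega)]
    norm_cast
    apply Finset.card_nbij' (i := id) (j := id)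
    · rintro ⟨a, b, c⟩ hx
      simp only [Finset.mem_coe, Finset.mem_filter, Finset.mem_product, Finset.mem_range] at hx
      obtain ⟨⟨ha, hb, hc⟩, heq⟩ := hx
      simp only [Finset.mem_coe, U, Finset.mem_filter, Finset.mem_product, Finset.mem_range, id]
      have key : (a+1)*i + (b+1)*j + c*(i+j) = a*i + b*j + c*(i+j) + (i+j) := by ring
      refine ⟨⟨by omega, by omega, by omega⟩, ?_⟩
      rw [key, heq]
      omega
    · rintro ⟨a, b, c⟩ hx
      simp only [Finset.mem_coe, U, Finset.mem_filter, Finset.mem_product, Finset.mem_range, id] at hx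
      obtain ⟨⟨ha, hb, hc⟩, heq⟩ := hx
      simp only [Finset.mem_coe, Finset.mem_filter, Finset.mem_product, Finset.mem_range, id]
      have e1 : (a+1)*i = a*i + i := by ring
      have e2 : (b+1)*j = b*j + j := by ring
      rw [e1, e2] at heq
      have k1 : a ≤ a * i := Nat.le_mul_of_pos_right a (by omega)
      have k2 : b ≤ b * j := Nat.le_mul_of_pos_right b (by omega)
      have k3 : c ≤ c * (i+j) := Nat.le_mul_of_pos_right c (by omega)
      have hk : a*i + b*j + c*(i+j) + (i+j) = m := by linarith
      have hb1 : a*i + b*j + c*(i+j) = m - (i+j) := Nat.eq_sub_of_add_eq hk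
      refine ⟨⟨?_, ?_, ?_⟩, hb1⟩ <;> omega
    · intro a _; rfl
    · intro a _; rfl
  · rw [if_neg h]
    have : U m i j = ∅ := by
      apply Finset.filter_false_of_mem
      rintro ⟨a, b, c⟩ _ heq
      have k1 : i ≤ (a+1) * i := Nat.le_mul_of_pos_left i (by omega)
      have k2 : j ≤ (b+1) * j := Nat.le_mul_of_pos_left j (by omega)
      have : i + j ≤ m := by linarith [Nat.zero_le (c * (i+j))]
      omega
    rw [this]
    simp

lemma core_Q (m : ℕ) :
    ((#((B5 m).filter fun x => x.1 * x.2.2.1 + x.2.1 * x.2.2.2.1 = m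
        ∧ x.2.2.2.2 ≤ x.1 ∧ x.2.2.2.2 ≤ x.2.1) : ℕ) : ℚ)
      = ∑ p ∈ DivS m, ((p.2:ℚ)^2 - (p.1:ℚ)*(p.2:ℚ)) := by
  have k2 := key2 m
  rw [diag_card m, tdiag_card m] at k2
  have e1 : ((∑ p ∈ DivS m, (p.2-1)*p.2 : ℕ) : ℚ) = ∑ p ∈ DivS m, ((p.2:ℚ)-1)*(p.2:ℚ) := by
    push_cast
    refine Finset.sum_congr rfl fun p hp => ?_
    rw [mem_DivS] at hp
    rw [Nat.cast_sub hp.2.1.1, Nat.cast_one]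
  have e2 : ((∑ p ∈ DivS m, p.1*(p.2-1) : ℕ) : ℚ) = ∑ p ∈ DivS m, (p.1:ℚ)*((p.2:ℚ)-1) := by
    push_cast
    refine Finset.sum_congr rfl fun p hp => ?_
    rw [mem_DivS] at hp
    rw [Nat.cast_sub hp.2.1.1, Nat.cast_one]
  have cast2 : ((∑ p ∈ DivS m, (p.2-1)*p.2 : ℕ) : ℚ)
      = (#((B5 m).filter fun x => x.1 * x.2.2.1 + x.2.1 * x.2.2.2.1 = m
          ∧ x.2.2.2.2 ≤ x.1 ∧ x.2.2.2.2 ≤ x.2.1) : ℚ)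
        + ((∑ p ∈ DivS m, p.1*(p.2-1) : ℕ) : ℚ) := by
    exact_mod_cast congrArg (fun z : ℕ => (z : ℚ)) k2
  rw [e1, e2] at cast2
  have hsplit : ∑ p ∈ DivS m, (((p.2:ℚ)-1)*(p.2:ℚ) - (p.1:ℚ)*((p.2:ℚ)-1))
      = ∑ p ∈ DivS m, ((p.2:ℚ)^2 - (p.1:ℚ)*(p.2:ℚ)) + ∑ p ∈ DivS m, ((p.1:ℚ) - (p.2:ℚ)) := by
    rw [← Finset.sum_add_distrib]
    exact Finset.sum_congr rfl fun p _ => by ring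
  have hz : ∑ p ∈ DivS m, ((p.1:ℚ) - (p.2:ℚ)) = 0 := by
    have hs := div_swap m (fun a b => (a:ℚ) - (b:ℚ))
    have h2 : ∑ p ∈ DivS m, ((p.2:ℚ) - (p.1:ℚ)) = - ∑ p ∈ DivS m, ((p.1:ℚ) - (p.2:ℚ)) := by
      rw [← Finset.sum_neg_distrib]
      exact Finset.sum_congr rfl fun p _ => by ring
    linarith
  rw [Finset.sum_sub_distrib] at hsplit
  linarith

/-- `∑_{i,j>0} q^{i+j}/((1-qⁱ)(1-qʲ)(1-q^{i+j})) = Z(3) - ∑_{n>0} n·qⁿ/(1-qⁿ)²`. -/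
theorem stmt5 :
    psum2 (fun i j => X ^ (i + j) * (1 - X ^ i)⁻¹ * (1 - X ^ j)⁻¹ * (1 - X ^ (i + j))⁻¹)
      = Z3 - psum (fun n => (n : ℚ) • (X ^ n * ((1 - X ^ n)⁻¹) ^ 2)) := by
  ext m
  rw [psum2, coeff_mk, map_sub, Z3, psum, psum, coeff_mk, coeff_mk, ← Finset.sum_sub_distrib]
  have hL : ∀ p ∈ Icc 1 m ×ˢ Icc 1 m,
      coeff m (X ^ (p.1 + p.2) * (1 - X ^ p.1)⁻¹ * (1 - X ^ p.2)⁻¹ * (1 - X ^ (p.1 + p.2))⁻¹)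
        = (#(U m p.1 p.2) : ℚ) := by
    rintro ⟨i, j⟩ hp
    simp only [Finset.mem_coe, Finset.mem_product, Finset.mem_Icc] at hp
    obtain ⟨⟨hi1, hi2⟩, hj1, hj2⟩ := hp
    rw [inv_one_sub_pow (show i ≠ 0 by omega), inv_one_sub_pow (show j ≠ 0 by omega),
      inv_one_sub_pow (show i + j ≠ 0 by omega),
      show X ^ (i+j) * G i * G j * G (i+j) = (G i * G j * G (i+j)) * X ^ (i+j) from by ring]
    exact coeff_LHS_summand hi1 hj1
  rw [Finset.sum_congr rfl hL]
  have hR : ∀ n ∈ Icc 1 m,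
      coeff m (X^n * (1+X^n) * ((1-X^n : ℚ⟦X⟧)⁻¹)^3)
          - coeff m ((n:ℚ) • (X^n * ((1-X^n : ℚ⟦X⟧)⁻¹)^2))
        = if n ∣ m then (((m/n : ℕ):ℚ)^2 - (n:ℚ)*((m/n : ℕ):ℚ)) else 0 := by
    intro n hn
    simp only [Finset.mem_coe, Finset.mem_Icc] at hn
    rw [map_smul, smul_eq_mul]
    exact coeff_Z3_summand hn.1 hn.2
  rw [Finset.sum_congr rfl hR, sum_div_eq m (fun d e => ((e:ℕ):ℚ)^2 - (d:ℚ)*((e:ℕ):ℚ))]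
  rw [show (∑ p ∈ Icc 1 m ×ˢ Icc 1 m, (#(U m p.1 p.2):ℚ))
      = ((∑ p ∈ Icc 1 m ×ˢ Icc 1 m, #(U m p.1 p.2) : ℕ) : ℚ) from by push_cast; rfl]
  rw [← Finset.card_sigma, Usig_card m]
  exact core_Q m
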